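/- For every t > 0 and every x with |x| \le 1 + \sqrt{t}, one has |(\int_{-1}^1 \mu^2 \varphi_t(x-\mu) d\mu)(\int_{-1}^1 \varphi_t(x-\mu) d\mu) - (\int_{-1}^1 \mu \varphi_t(x-\mu) d\mu)^2|^2 \ge (c/t^2) e^{-2(2+\sqrt{t})^2/t} for some universal constant c > 0. -/

import Mathlib

open MeasureTheory Real

/-- Density of `N(0,t)`. -/
noncomputable def gaussDensity (t x : ℝ) : ℝ :=
  (Real.sqrt (2 * Real.pi * t))⁻¹ * Real.exp (-x ^ 2 / (2 * t))

set_option maxHeartbeats 1000000 in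
/-- There is a universal constant `c > 0` such that for every `t > 0` and every `x` with
`|x| ≤ 1 + √t`,
`|(∫ μ² φ_t(x-μ))(∫ φ_t(x-μ)) - (∫ μ φ_t(x-μ))²|² ≥ (c/t²) e^{-2(2+√t)²/t}`. -/
theorem determinant_lower_bound :
    ∃ c : ℝ, 0 < c ∧ ∀ t x : ℝ, 0 < t → |x| ≤ 1 + Real.sqrt t →
      (c / t ^ 2) * Real.exp (-2 * (2 + Real.sqrt t) ^ 2 / t)
        ≤ ((∫ μ in Set.Icc (-1 : ℝ) 1, μ ^ 2 * gaussDensity t (x - μ)) *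
            (∫ μ in Set.Icc (-1 : ℝ) 1, gaussDensity t (x - μ)) -
          (∫ μ in Set.Icc (-1 : ℝ) 1, μ * gaussDensity t (x - μ)) ^ 2) ^ 2 := by
  refine ⟨4 / (9 * Real.pi ^ 2), by positivity, ?_⟩
  intro t x ht hx
  have hπ := Real.pi_pos
  have h2t : (0:ℝ) < 2 * Real.pi * t := by positivity
  set K : ℝ := (Real.sqrt (2 * Real.pi * t))⁻¹ with hKdef
  have hK : 0 < K := inv_pos.mpr (Real.sqrt_pos.mpr h2t)
  set E : ℝ := Real.exp (-(2 + Real.sqrt t) ^ 2 / (2 * t)) with hEdef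
  have hEpos : 0 < E := Real.exp_pos _
  set φ : ℝ → ℝ := fun μ => gaussDensity t (x - μ) with hφdef
  have hφc : Continuous φ := by
    simp only [hφdef, gaussDensity]
    fun_prop
  have hφpos : ∀ μ, 0 < φ μ :=
    fun μ => mul_pos (inv_pos.mpr (Real.sqrt_pos.mpr h2t)) (Real.exp_pos _)
  have hst : 0 ≤ Real.sqrt t := Real.sqrt_nonneg t
  -- pointwise lower bound on φ over [-1,1]
  have hmin : ∀ μ ∈ Set.Icc (-1:ℝ) 1, K * E ≤ φ μ := by
    intro μ hμ
    have hμ1 : |μ| ≤ 1 := abs_le.mpr ⟨hμ.1, hμ.2⟩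
    have habs : |x - μ| ≤ 2 + Real.sqrt t := by
      calc |x - μ| ≤ |x| + |μ| := abs_sub _ _
        _ ≤ (1 + Real.sqrt t) + 1 := add_le_add hx hμ1
        _ = 2 + Real.sqrt t := by ring
    have hsq : (x - μ)^2 ≤ (2 + Real.sqrt t)^2 := by
      have h1 := abs_nonneg (x - μ)
      nlinarith [sq_abs (x - μ)]
    have key : Real.exp (-(2 + Real.sqrt t)^2/(2*t)) ≤ Real.exp (-((x - μ))^2/(2*t)) := by
      apply Real.exp_le_exp.mpr
      gcongr
    calc K * E ≤ K * Real.exp (-((x - μ))^2/(2*t)) :=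
          mul_le_mul_of_nonneg_left key hK.le
      _ = φ μ := by simp only [hφdef, gaussDensity, hKdef]
  -- integrabilities
  have hint0 : IntegrableOn φ (Set.Icc (-1:ℝ) 1) := hφc.integrableOn_Icc
  have hint1 : IntegrableOn (fun μ => μ * φ μ) (Set.Icc (-1:ℝ) 1) :=
    (continuous_id.mul hφc).integrableOn_Icc
  have hint2 : IntegrableOn (fun μ => μ^2 * φ μ) (Set.Icc (-1:ℝ) 1) :=
    ((continuous_pow 2).mul hφc).integrableOn_Icc
  set m0 := ∫ μ in Set.Icc (-1:ℝ) 1, φ μ with hm0def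
  set m1 := ∫ μ in Set.Icc (-1:ℝ) 1, μ * φ μ with hm1def
  set m2 := ∫ μ in Set.Icc (-1:ℝ) 1, μ^2 * φ μ with hm2def
  have hm0ge : 2 * (K * E) ≤ m0 := by
    have h1 : ∫ (_ : ℝ) in Set.Icc (-1:ℝ) 1, (K*E) ≤ m0 :=
      setIntegral_mono_on ((integrableOn_const_iff).mpr (Or.inr (by simp))) hint0
        measurableSet_Icc hmin
    rw [setIntegral_const, measureReal_def, Real.volume_Icc] at h1
    rw [show ((1:ℝ) - (-1)) = 2 by norm_num] at h1
    rw [ENNReal.toReal_ofReal (by norm_num : (0:ℝ) ≤ 2)] at h1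
    simpa using h1
  have hm0pos : 0 < m0 := lt_of_lt_of_le (by positivity) hm0ge
  have hm1le : |m1| ≤ m0 := by
    have h1 : |m1| ≤ ∫ μ in Set.Icc (-1:ℝ) 1, |μ| * |φ μ| := by
      simpa [Real.norm_eq_abs] using
        norm_integral_le_integral_norm (μ := volume.restrict (Set.Icc (-1:ℝ) 1))
          (fun μ : ℝ => μ * φ μ)
    have h2 : ∫ μ in Set.Icc (-1:ℝ) 1, |μ| * |φ μ| ≤ m0 := by
      apply setIntegral_mono_on (continuous_abs.mul hφc.abs).integrableOn_Icc
        hint0 measurableSet_Icc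
      intro μ hμ
      have hμ1 : |μ| ≤ 1 := abs_le.mpr ⟨hμ.1, hμ.2⟩
      show |μ| * |φ μ| ≤ φ μ
      rw [abs_of_pos (hφpos μ)]
      nlinarith [hφpos μ, abs_nonneg μ]
    linarith
  set a : ℝ := m1 / m0 with hadef
  have ha : |a| ≤ 1 := by
    rw [hadef, abs_div, abs_of_pos hm0pos]
    exact div_le_one_of_le₀ hm1le hm0pos.le
  -- variance identity
  have hexp : ∀ μ : ℝ, (μ - a)^2 * φ μ = μ^2*φ μ - (2*a)*(μ*φ μ) + a^2*φ μ := by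
    intro μ; ring
  have hIint : IntegrableOn (fun μ => (μ - a)^2 * φ μ) (Set.Icc (-1:ℝ) 1) :=
    (((continuous_id.sub continuous_const).pow 2).mul hφc).integrableOn_Icc
  have hsubc : Continuous fun μ : ℝ => μ^2*φ μ - 2*a*(μ*φ μ) :=
    ((continuous_pow 2).mul hφc).sub (continuous_const.mul (continuous_id.mul hφc))
  have e1 : (∫ μ in Set.Icc (-1:ℝ) 1, (μ^2*φ μ - 2*a*(μ*φ μ) + a^2*φ μ))
      = (∫ μ in Set.Icc (-1:ℝ) 1, (μ^2*φ μ - 2*a*(μ*φ μ)))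
        + ∫ μ in Set.Icc (-1:ℝ) 1, a^2*φ μ :=
    integral_add hsubc.integrableOn_Icc (hint0.const_mul (a^2))
  have e2 : (∫ μ in Set.Icc (-1:ℝ) 1, (μ^2*φ μ - 2*a*(μ*φ μ)))
      = m2 - ∫ μ in Set.Icc (-1:ℝ) 1, 2*a*(μ*φ μ) :=
    integral_sub hint2 (hint1.const_mul (2*a))
  have e3 : (∫ μ in Set.Icc (-1:ℝ) 1, 2*a*(μ*φ μ)) = 2*a*m1 := integral_const_mul _ _
  have e4 : (∫ μ in Set.Icc (-1:ℝ) 1, a^2*φ μ) = a^2*m0 := integral_const_mul _ _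
  have hI : (∫ μ in Set.Icc (-1:ℝ) 1, (μ - a)^2 * φ μ)
      = m2 - (2*a)*m1 + a^2*m0 := by
    simp only [hexp]
    rw [e1, e2, e3, e4]
  -- lower bound on the variance integral
  have hquad : ∫ μ in Set.Icc (-1:ℝ) 1, (μ - a)^2 = 2/3 + 2*a^2 := by
    rw [integral_Icc_eq_integral_Ioc,
      ← intervalIntegral.integral_of_le (by norm_num : (-1:ℝ) ≤ 1),
      intervalIntegral.integral_comp_sub_right (fun μ => μ^2) a,
      integral_pow]
    norm_num
    ring
  have hI2 : (2/3) * (K*E) ≤ ∫ μ in Set.Icc (-1:ℝ) 1, (μ - a)^2 * φ μ := by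
    have step : (∫ μ in Set.Icc (-1:ℝ) 1, (μ - a)^2 * (K*E))
        ≤ ∫ μ in Set.Icc (-1:ℝ) 1, (μ - a)^2 * φ μ := by
      apply setIntegral_mono_on
        (((continuous_id.sub continuous_const).pow 2).mul continuous_const).integrableOn_Icc
        hIint measurableSet_Icc
      intro μ hμ
      exact mul_le_mul_of_nonneg_left (hmin μ hμ) (sq_nonneg _)
    rw [integral_mul_const, hquad] at step
    nlinarith [sq_nonneg a, mul_pos hK hEpos]
  have hDval : m2*m0 - m1^2 = m0 * (m2 - (2*a)*m1 + a^2*m0) := by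
    rw [hadef]
    field_simp
    ring
  have hDge : (4/3)*(K*E)^2 ≤ m2*m0 - m1^2 := by
    calc (4/3)*(K*E)^2 = (2*(K*E)) * ((2/3)*(K*E)) := by ring
      _ ≤ m0 * (∫ μ in Set.Icc (-1:ℝ) 1, (μ - a)^2 * φ μ) := by
          apply mul_le_mul hm0ge hI2 (by positivity)
            (le_trans (by positivity) hm0ge)
      _ = m2*m0 - m1^2 := by rw [hI, ← hDval]
  have hKE : (0:ℝ) ≤ (4/3)*(K*E)^2 := by positivity
  have hsq : ((4/3)*(K*E)^2)^2 ≤ (m2*m0 - m1^2)^2 := pow_le_pow_left₀ hKE hDge 2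
  have hK2 : K^2 = (2 * Real.pi * t)⁻¹ := by
    rw [hKdef, inv_pow, Real.sq_sqrt h2t.le]
  have hE4 : E^4 = Real.exp (-2 * (2 + Real.sqrt t)^2 / t) := by
    rw [hEdef, ← Real.exp_nat_mul]
    congr 1
    push_cast
    field_simp
    ring
  refine le_trans (le_of_eq ?_) hsq
  rw [show ((4/3)*(K*E)^2)^2 = (16/9) * (K^2)^2 * E^4 by ring, hK2, hE4]
  field_simp
  ring
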